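/- Monotonicity of the partially synchronous LOLA valuation in the skew: for every non-recursive LOLA stream expression e, every position j ∈ {0,…,N}, and skews 1 ≤ ε ≤ ε', one has val_PS^ε(e)(j) ⊆ val_PS^{ε'}(e)(j). -/
import Mathlib


/-- Non-recursive LOLA stream expressions over a value type `T` and `m` input
stream variables: constants, stream variables, pointwise `k`-ary function
applications, and offset expressions `e[p,c]` with integer offset `p` and
default value `c`. -/
inductive LExpr (T : Type) (m : ℕ) : Type where
  | const : T → LExpr T m
  | var : Fin m → LExpr T m
  | app : (k : ℕ) → ((Fin k → T) → T) → (Fin k → LExpr T m) → LExpr T m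
  | offset : LExpr T m → ℤ → T → LExpr T m

/-- The synchronous valuation `val_S` of a LOLA expression at position `j`,
given the trace length `N` and input streams `τ`. -/
def valS {T : Type} {m : ℕ} (N : ℕ) (τ : Fin m → ℕ → T) : LExpr T m → ℕ → T
  | .const c, _ => c
  | .var i, j => τ i j
  | .app _ f es, j => f (fun l => valS N τ (es l) j)
  | .offset e p c, j =>
      if 0 ≤ (j : ℤ) + p ∧ (j : ℤ) + p ≤ (N : ℤ) then valS N τ e ((j : ℤ) + p).toNat
      else c

/-- The partially synchronous valuation `val_PS^ε` of a LOLA expression at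
position `j`, assigning the set of values obtainable under clock skew `ε`. -/
def valPS {T : Type} {m : ℕ} (N : ℕ) (τ : Fin m → ℕ → T) (ε : ℕ) :
    LExpr T m → ℕ → Set T
  | .const c, _ => {c}
  | .var i, j =>
      {v | ∃ κ : ℕ, max 0 ((j : ℤ) - (ε : ℤ) + 1) ≤ (κ : ℤ) ∧
        (κ : ℤ) ≤ min (N : ℤ) ((j : ℤ) + (ε : ℤ) - 1) ∧ τ i κ = v}
  | .app k f es, j =>
      {v | ∃ vs : Fin k → T, (∀ l, vs l ∈ valPS N τ ε (es l) j) ∧ f vs = v}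
  | .offset e p c, j =>
      if 0 ≤ (j : ℤ) + p ∧ (j : ℤ) + p ≤ (N : ℤ) then valPS N τ ε e ((j : ℤ) + p).toNat
      else {c}

/-- monotonicity of the partially synchronous LOLA valuation in
the skew: for every expression `e`, position `j ∈ {0,…,N}` and skews
`1 ≤ ε ≤ ε'`, one has `val_PS^ε(e)(j) ⊆ val_PS^{ε'}(e)(j)`. -/
theorem valPS_mono_skew {T : Type} {m : ℕ} (N : ℕ) (τ : Fin m → ℕ → T)
    (ε ε' : ℕ) (hε : 1 ≤ ε) (hεε : ε ≤ ε') (e : LExpr T m) (j : ℕ) (hj : j ≤ N) :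
    valPS N τ ε e j ⊆ valPS N τ ε' e j := by
  induction e generalizing j with
  | const c => exact fun v hv => hv
  | var i =>
    rintro v ⟨κ, h1, h2, rfl⟩
    exact ⟨κ, le_trans (by omega) h1, le_trans h2 (by omega), rfl⟩
  | app k f es ih =>
    rintro v ⟨vs, hvs, rfl⟩
    exact ⟨vs, fun l => ih l j hj (hvs l), rfl⟩
  | offset e p c ih =>
    intro v hv
    simp only [valPS] at hv ⊢
    split at hv
    · rename_i h
      rw [if_pos h]
      exact ih _ (by omega) hv
    · rename_i h
      rw [if_neg h]; exact hv
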